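/- Let n ≥ 1 and let V be a bicompatible subgroup of S([n]^2) such that the graph G_R is a complete graph on [n]. Then for each v ∈ V there is a unique σ_v ∈ S_n such that the first coordinate of v(a,b) equals σ_v(a) for all a, b ∈ [n], and the map σ : V → S_n sending v to σ_v is a group homomorphism, i.e. σ_{uw} = σ_u ∘ σ_w for all u, w ∈ V. -/

import Mathlib

/-- The permutation `u ⊗ 1` of `[n]³`, acting as `(x,y,z) ↦ (u(x,y), z)`. -/
def tensorOne {n : ℕ} (u : Equiv.Perm (Fin n × Fin n)) :
    Equiv.Perm (Fin n × Fin n × Fin n) :=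
  (Equiv.prodAssoc (Fin n) (Fin n) (Fin n)).permCongr (u.prodCongr (Equiv.refl (Fin n)))

/-- The permutation `1 ⊗ u` of `[n]³`, acting as `(x,y,z) ↦ (x, u(y,z))`. -/
def oneTensor {n : ℕ} (u : Equiv.Perm (Fin n × Fin n)) :
    Equiv.Perm (Fin n × Fin n × Fin n) :=
  (Equiv.refl (Fin n)).prodCongr u

/-- `u` is compatible with `v` if `(v ⊗ 1)(1 ⊗ u) = (1 ⊗ u)(v ⊗ 1)` in `S([n]³)`. -/
def Compatible {n : ℕ} (u v : Equiv.Perm (Fin n × Fin n)) : Prop :=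
  tensorOne v * oneTensor u = oneTensor u * tensorOne v

/-- The graph `G_R` on `[n]` attached to a subgroup `V ≤ S([n]²)`: distinct
`a, b` are adjacent iff some `v ∈ V` maps some point of row `a` to a point of
row `b`. -/
def GR {n : ℕ} (V : Subgroup (Equiv.Perm (Fin n × Fin n))) : SimpleGraph (Fin n) where
  Adj a b := a ≠ b ∧ ∃ x y : Fin n, ∃ v ∈ V, v (a, x) = (b, y)
  symm := by
    constructor
    rintro a b ⟨hab, x, y, v, hv, hvab⟩
    refine ⟨hab.symm, y, x, v⁻¹, V.inv_mem hv, ?_⟩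
    rw [← hvab]
    exact v.symm_apply_apply (a, x)
  loopless := ⟨fun a h => h.1 rfl⟩

/-- The graph `G_C` on `[n]` attached to a subgroup `V ≤ S([n]²)`: distinct
`a, b` are adjacent iff some `v ∈ V` maps some point of column `a` to a point
of column `b`. -/
def GC {n : ℕ} (V : Subgroup (Equiv.Perm (Fin n × Fin n))) : SimpleGraph (Fin n) where
  Adj a b := a ≠ b ∧ ∃ x y : Fin n, ∃ v ∈ V, v (x, a) = (y, b)
  symm := by
    constructor
    rintro a b ⟨hab, x, y, v, hv, hvab⟩
    refine ⟨hab.symm, y, x, v⁻¹, V.inv_mem hv, ?_⟩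
    rw [← hvab]
    exact v.symm_apply_apply (x, a)
  loopless := ⟨fun a h => h.1 rfl⟩


theorem stmt_19 (n : ℕ) (hn : 1 ≤ n)
    (V : Subgroup (Equiv.Perm (Fin n × Fin n)))
    (hV : ∀ u ∈ V, ∀ v ∈ V, Compatible u v)
    (hcomplete : ∀ a b : Fin n, a ≠ b → (GR V).Adj a b) :
    (∀ v ∈ V, ∃! σ : Equiv.Perm (Fin n), ∀ a b : Fin n, (v (a, b)).1 = σ a) ∧
    (∀ u w : Equiv.Perm (Fin n × Fin n), u ∈ V → w ∈ V →
      ∀ σu σw σuw : Equiv.Perm (Fin n),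
        (∀ a b : Fin n, (u (a, b)).1 = σu a) →
        (∀ a b : Fin n, (w (a, b)).1 = σw a) →
        (∀ a b : Fin n, ((u * w) (a, b)).1 = σuw a) →
        σuw = σu * σw) := by
  classical
  have b0 : Fin n := ⟨0, hn⟩
  -- key consequence of compatibility
  have key : ∀ v ∈ V, ∀ u ∈ V, ∀ x y z : Fin n,
      (v (x, (u (y, z)).1)).1 = (v (x, y)).1 := by
    intro v hv u hu x y z
    have h := hV u hu v hv
    have h2 := congrArg (fun e => ((e : Equiv.Perm (Fin n × Fin n × Fin n)) (x, y, z)).1) h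
    simpa [tensorOne, oneTensor, Equiv.Perm.mul_apply, Equiv.permCongr_apply,
      Equiv.prodCongr_apply, Equiv.prodAssoc, Prod.map] using h2
  -- first coordinate of v (a,b) doesn't depend on b
  have const : ∀ v ∈ V, ∀ a b b' : Fin n, (v (a, b)).1 = (v (a, b')).1 := by
    intro v hv a b b'
    by_cases hbb : b = b'
    · rw [hbb]
    · obtain ⟨-, z, w, u, hu, huz⟩ := hcomplete b b' hbb
      have := key v hv u hu a b z
      rw [huz] at this
      exact this.symm
  constructor
  · intro v hv
    set f : Fin n → Fin n := fun a => (v (a, b0)).1 with hf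
    have hinj : Function.Injective f := by
      intro a a' haa
      by_contra hne
      -- the maps b ↦ (v (a,b)).2 and b ↦ (v (a',b)).2 are injective hence surjective
      have hinj1 : Function.Injective (fun b => (v (a, b)).2) := by
        intro b b' hb
        have h1 : v (a, b) = v (a, b') :=
          Prod.ext (by rw [const v hv a b b']) hb
        exact (Prod.ext_iff.mp (v.injective h1)).2
      have hsurj1 := Finite.injective_iff_surjective.mp hinj1
      have hinj2 : Function.Injective (fun b => (v (a', b)).2) := by
        intro b b' hb
        have h1 : v (a', b) = v (a', b') :=
          Prod.ext (by rw [const v hv a' b b']) hb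
        exact (Prod.ext_iff.mp (v.injective h1)).2
      have hsurj2 := Finite.injective_iff_surjective.mp hinj2
      obtain ⟨b, hb⟩ := hsurj2 ((v (a, b0)).2)
      have heq : v (a, b0) = v (a', b) := by
        apply Prod.ext
        · have h1 : (v (a', b)).1 = (v (a', b0)).1 := const v hv a' b b0
          rw [h1]; exact haa
        · exact hb.symm
      have := v.injective heq
      exact hne (Prod.ext_iff.mp this).1
    refine ⟨Equiv.ofBijective f (Finite.injective_iff_bijective.mp hinj), ?_, ?_⟩
    · intro a b
      show (v (a, b)).1 = f a
      exact const v hv a b b0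
    · intro σ hσ
      ext a
      have := hσ a b0
      simp [Equiv.ofBijective, ← this, hf]
  · intro u w hu hw σu σw σuw h1 h2 h3
    ext a
    have := h3 a b0
    rw [Equiv.Perm.mul_apply] at this
    rw [Equiv.Perm.mul_apply, ← this, h1, h2]
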